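/- Let d ≥ 1 and 0 ≤ j < k ≤ d be integers, and let z be a complex number with Im z > 0 such that A(j,k;z) = lπ for an integer l with 1 ≤ l ≤ k−j−1. Then the real number Re( C_d(z+d−j) · conj(C_d(z+d−k)) ) is nonzero, and its sign equals (−1)^l; that is, it is positive if l is even and negative if l is odd. -/

import Mathlib

open ComplexConjugate

/-- The binomial coefficient polynomial `C_d(w) = (1/d!) ∏_{i=0}^{d-1} (w - i)`. -/
noncomputable def binomC (d : ℕ) (w : ℂ) : ℂ :=
  (∏ i ∈ Finset.range d, (w - i)) / (Nat.factorial d)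

/-- The angle sum `A(j,k;z) = Σ_{m=j}^{k-1} (arg(z-m) - arg(z+d-m))`. -/
noncomputable def angleSum (d j k : ℕ) (z : ℂ) : ℝ :=
  ∑ m ∈ Finset.Icc j (k - 1), (Complex.arg (z - m) - Complex.arg (z + d - m))

open Finset in
lemma shiftG (G : ℤ → ℝ) (d : ℕ) (c : ℤ) :
    (∑ i ∈ range d, G (c - i)) - ∑ i ∈ range d, G (c - 1 - i) = G c - G (c - d) := by
  have h1 := Finset.sum_range_succ (fun i : ℕ => G (c - i)) d
  have h2 := Finset.sum_range_succ' (fun i : ℕ => G (c - i)) d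
  have h3 : ∀ i : ℕ, G (c - (i + 1 : ℕ)) = G (c - 1 - i) := by
    intro i; congr 1; push_cast; ring
  rw [Finset.sum_congr rfl (fun i _ => h3 i)] at h2
  have h4 : c - (0:ℕ) = c := by push_cast; ring
  rw [h4] at h2
  linarith

open Finset in
lemma teleG (G : ℤ → ℝ) (d j : ℕ) : ∀ k, j < k →
    (∑ i ∈ range d, G (d - j - i)) - ∑ i ∈ range d, G (d - k - i)
      = ∑ m ∈ Icc j (k - 1), (G (d - m) - G (-m)) := by
  intro k hk
  induction k, hk using Nat.le_induction with
  | base =>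
    have h3 : ∀ i : ℕ, G (↑d - ↑(j+1) - ↑i) = G (↑d - ↑j - 1 - ↑i) := by
      intro i; congr 1; push_cast; ring
    rw [Finset.sum_congr rfl (fun i _ => h3 i)]
    have h := shiftG G d (d - j)
    have he : j + 1 - 1 = j := by omega
    rw [he, Finset.Icc_self, Finset.sum_singleton]
    have hcd : (↑d - ↑j - (d:ℤ)) = -(j:ℤ) := by ring
    rw [hcd] at h
    linarith
  | succ k hk ih =>
    have h3 : ∀ i : ℕ, G (↑d - ↑(k+1) - ↑i) = G (↑d - ↑k - 1 - ↑i) := by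
      intro i; congr 1; push_cast; ring
    have htop : ∑ m ∈ Icc j ((k+1) - 1), (G (d - m) - G (-m))
        = ∑ m ∈ Icc j (k - 1), (G (d - m) - G (-m)) + (G (d - k) - G (-k)) := by
      have he : k + 1 - 1 = k := by omega
      have hk1 : k = (k - 1) + 1 := by omega
      rw [he, hk1, Finset.sum_Icc_succ_top (by omega : j ≤ (k-1)+1)]
      rw [← hk1]
    have h := shiftG G d (d - k)
    have hcd : (↑d - ↑k - (d:ℤ)) = -(k:ℤ) := by ring
    rw [hcd] at h
    rw [htop, ← ih, Finset.sum_congr rfl (fun i _ => h3 i)]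
    linarith

open Finset in
lemma prodPolar (s : Finset ℕ) (w : ℕ → ℂ) :
    ∏ i ∈ s, w i = ((∏ i ∈ s, ‖w i‖ : ℝ) : ℂ) *
      Complex.exp (((∑ i ∈ s, Complex.arg (w i) : ℝ) : ℂ) * Complex.I) := by
  calc ∏ i ∈ s, w i
      = ∏ i ∈ s, (((‖w i‖ : ℝ) : ℂ) * Complex.exp ((Complex.arg (w i) : ℂ) * Complex.I)) := by
        refine Finset.prod_congr rfl fun i _ => ?_
        rw [Complex.norm_mul_exp_arg_mul_I]
    _ = _ := by
        rw [Finset.prod_mul_distrib, ← Complex.exp_sum, Complex.ofReal_prod, Complex.ofReal_sum,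
          Finset.sum_mul]

/-- Lemma 4.9: on the `l`-th oval `𝒟_{j,k;l}`, the dot product
`w_j(z) · w_k(z) = Re(C_d(z+d-j) · conj(C_d(z+d-k)))` is nonzero with sign `(-1)^l`. -/
theorem stmt_15 (d j k l : ℕ) (hd : 1 ≤ d) (hjk : j < k) (hkd : k ≤ d)
    (hl : 1 ≤ l) (hl' : l ≤ k - j - 1) (z : ℂ) (hz : 0 < z.im)
    (hA : angleSum d j k z = l * Real.pi) :
    (binomC d (z + d - j) * conj (binomC d (z + d - k))).re ≠ 0 ∧
      Real.sign ((binomC d (z + d - j) * conj (binomC d (z + d - k))).re)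
        = (-1 : ℝ) ^ l := by
  set G : ℤ → ℝ := fun t => Complex.arg (z + t) with hG
  -- abbreviations for the two products
  set Rj : ℝ := ∏ i ∈ Finset.range d, ‖(z + d - j) - i‖ with hRj
  set Rk : ℝ := ∏ i ∈ Finset.range d, ‖(z + d - k) - i‖ with hRk
  set Sj : ℝ := ∑ i ∈ Finset.range d, Complex.arg ((z + d - j) - i) with hSj
  set Sk : ℝ := ∑ i ∈ Finset.range d, Complex.arg ((z + d - k) - i) with hSk
  -- nonvanishing of factors
  have hne : ∀ (a : ℕ) (i : ℕ), ((z + a - j) : ℂ) ≠ 0 → True := fun _ _ _ => trivial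
  have hfac : ∀ (a i : ℕ), ((z + (d:ℂ) - a) - i) ≠ 0 := by
    intro a i h
    have := congrArg Complex.im h
    simp at this
    linarith
  have hRjpos : 0 < Rj := Finset.prod_pos fun i _ => (norm_pos_iff.mpr (hfac j i))
  have hRkpos : 0 < Rk := Finset.prod_pos fun i _ => (norm_pos_iff.mpr (hfac k i))
  -- identify arguments with G
  have hSGen : ∀ a : ℕ, (∑ i ∈ Finset.range d, Complex.arg ((z + (d:ℂ) - a) - i))
      = ∑ i ∈ Finset.range d, G ((d:ℤ) - a - i) := by
    intro a
    refine Finset.sum_congr rfl fun i _ => ?_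
    simp only [hG]
    congr 1
    push_cast; ring
  -- angle sum in terms of G
  have hAG : angleSum d j k z = ∑ m ∈ Finset.Icc j (k-1), (G (-(m:ℤ)) - G ((d:ℤ) - m)) := by
    unfold angleSum
    refine Finset.sum_congr rfl fun m _ => ?_
    simp only [hG]
    congr 2
    · push_cast; ring
    · push_cast; ring
  -- the key angle identity
  have hSdiff : Sj - Sk = -(l * Real.pi) := by
    have ht := teleG G d j k hjk
    rw [hSj, hSk, hSGen j, hSGen k, ht]
    have : ∑ m ∈ Finset.Icc j (k-1), (G ((d:ℤ) - m) - G (-(m:ℤ)))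
        = -∑ m ∈ Finset.Icc j (k-1), (G (-(m:ℤ)) - G ((d:ℤ) - m)) := by
      rw [← Finset.sum_neg_distrib]
      exact Finset.sum_congr rfl fun m _ => by ring
    rw [this, ← hAG, hA]
  -- polar forms
  have hPj : (∏ i ∈ Finset.range d, ((z + (d:ℂ) - j) - i))
      = ((Rj : ℝ) : ℂ) * Complex.exp ((Sj : ℂ) * Complex.I) := prodPolar _ _
  have hPk : (∏ i ∈ Finset.range d, ((z + (d:ℂ) - k) - i))
      = ((Rk : ℝ) : ℂ) * Complex.exp ((Sk : ℂ) * Complex.I) := prodPolar _ _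
  -- the exponential value
  have hexp : Complex.exp ((Sj : ℂ) * Complex.I) * Complex.exp (-((Sk : ℂ) * Complex.I))
      = (-1 : ℂ) ^ l := by
    rw [← Complex.exp_add]
    have h1 : (Sj : ℂ) * Complex.I + -((Sk : ℂ) * Complex.I) = ((Sj - Sk : ℝ) : ℂ) * Complex.I := by
      push_cast; ring
    rw [h1, hSdiff]
    have h2 : ((-(l * Real.pi) : ℝ) : ℂ) * Complex.I = -((l : ℂ) * ((Real.pi : ℂ) * Complex.I)) := by
      push_cast; ring
    rw [h2, Complex.exp_neg, Complex.exp_nat_mul, Complex.exp_pi_mul_I]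
    rw [← inv_pow, inv_neg, inv_one]
  -- compute the product
  set c : ℝ := Rj * Rk / ((d.factorial : ℝ) * (d.factorial : ℝ)) with hc
  have hcpos : 0 < c := by
    apply div_pos (mul_pos hRjpos hRkpos)
    positivity
  have hmain : binomC d (z + d - j) * conj (binomC d (z + d - k))
      = ((c : ℝ) : ℂ) * (-1 : ℂ) ^ l := by
    unfold binomC
    rw [hPj, hPk]
    rw [map_div₀, map_mul]
    have hconjR : conj ((Rk : ℝ) : ℂ) = ((Rk : ℝ) : ℂ) := Complex.conj_ofReal _
    have hconjE : conj (Complex.exp ((Sk : ℂ) * Complex.I)) = Complex.exp (-((Sk : ℂ) * Complex.I)) := by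
      rw [← Complex.exp_conj]
      congr 1
      simp [Complex.conj_I]
    have hconjF : conj ((d.factorial : ℂ)) = (d.factorial : ℂ) := by
      simp
    rw [hconjR, hconjE, hconjF]
    have key : (((Rj:ℂ)) * Complex.exp ((Sj:ℂ) * Complex.I) / (d.factorial:ℂ)) * (((Rk:ℂ)) * Complex.exp (-((Sk:ℂ) * Complex.I)) / (d.factorial:ℂ))
        = ((Rj:ℂ) * (Rk:ℂ) / ((d.factorial:ℂ)*(d.factorial:ℂ))) * (Complex.exp ((Sj:ℂ)*Complex.I) * Complex.exp (-((Sk:ℂ)*Complex.I))) := by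
      ring
    rw [key, hexp, hc]
    push_cast
    ring
  have hcast : ((c : ℂ) * (-1 : ℂ) ^ l) = (((c * (-1 : ℝ) ^ l : ℝ)) : ℂ) := by
    push_cast
    ring
  have hre : (binomC d (z + d - j) * conj (binomC d (z + d - k))).re = c * (-1 : ℝ) ^ l := by
    rw [hmain, hcast, Complex.ofReal_re]
  rw [hre]
  rcases Nat.even_or_odd l with he | ho
  · rw [he.neg_one_pow, mul_one]
    exact ⟨hcpos.ne', Real.sign_of_pos hcpos⟩
  · rw [ho.neg_one_pow, mul_neg_one]
    exact ⟨neg_ne_zero.mpr hcpos.ne', Real.sign_of_neg (neg_neg_of_pos hcpos)⟩
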